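/- Define \xi_{-1}^{(r)}(z) = z^r/r for 1 \le r \le a-1 and \xi_{-1}^{(a)}(z) = z^a, and \xi_{k+1}^{(r)} = (z/(1 - a z^a)) d/dz \, \xi_k^{(r)}. Then for every k \ge 1, \xi_k^{(r)}(z) = z^r p_k(z^a) / (1 - a z^a)^{2k+1} for some polynomial p_k, of degree k if 1 \le r \le a-1 and degree k-1 if r = a. -/

import Mathlib

open Polynomial

/-- The functions `ξ_k^{(r)}` (indexed here with a shift: `xi a r 0 = ξ_{-1}^{(r)}`,
`xi a r (k+1) = ξ_k^{(r)}`), defined by `ξ_{-1}^{(r)}(z) = z^r/r` for `1 ≤ r ≤ a-1`,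
`ξ_{-1}^{(a)}(z) = z^a`, and `ξ_{k+1}^{(r)} = (z/(1-az^a)) d/dz ξ_k^{(r)}`. -/
noncomputable def xi (a r : ℕ) : ℕ → ℝ → ℝ
  | 0 => fun z => if r = a then z ^ a else z ^ r / r
  | k + 1 => fun z => z / (1 - a * z ^ a) * deriv (xi a r k) z

noncomputable def qstep (a r m : ℕ) (p : Polynomial ℝ) : Polynomial ℝ :=
  (C (r : ℝ) * p + C (a : ℝ) * X * derivative p) * (1 - C (a : ℝ) * X)
    + C ((m : ℝ) * (a : ℝ) ^ 2) * X * p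


lemma qstep_spec (a r m : ℕ) (ha : 0 < a) (p : Polynomial ℝ) (hc : 0 < p.leadingCoeff)
    (h : (r : ℝ) < ((m : ℝ) - p.natDegree) * a) :
    (qstep a r m p).natDegree = p.natDegree + 1 ∧ 0 < (qstep a r m p).leadingCoeff := by
  have hp : p ≠ 0 := fun h0 => by simp [h0] at hc
  have ha' : (0 : ℝ) < a := by exact_mod_cast ha
  have hpos : (0 : ℝ) < ((m : ℝ) - p.natDegree) * a - r := by linarith
  rcases Nat.eq_zero_or_pos p.natDegree with hn0 | hn1
  · obtain ⟨c, hP⟩ : ∃ c : ℝ, p = C c := ⟨p.coeff 0, p.eq_C_of_natDegree_eq_zero hn0⟩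
    subst hP
    have hc' : (0 : ℝ) < c := by simpa using hc
    have hpos' : (0 : ℝ) < (m:ℝ)*a - r := by
      rw [hn0] at hpos; push_cast at hpos; linarith
    have e : qstep a r m (C c) = C (c * ((a:ℝ) * ((m:ℝ)*a - r))) * X + C ((r:ℝ)*c) := by
      unfold qstep
      simp only [derivative_C, mul_zero, add_zero, map_mul, map_sub, map_pow, map_one]
      ring
    have hne : c * ((a:ℝ) * ((m:ℝ)*a - r)) ≠ 0 :=
      ne_of_gt (mul_pos hc' (mul_pos ha' hpos'))
    constructor
    · rw [e, natDegree_linear hne, hn0]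
    · rw [e, leadingCoeff_linear hne]
      exact mul_pos hc' (mul_pos ha' hpos')
  · obtain ⟨n', hn⟩ : ∃ n', p.natDegree = n' + 1 := ⟨p.natDegree - 1, by omega⟩
    have hlcc : p.coeff (n' + 1) = p.leadingCoeff := by rw [Polynomial.leadingCoeff, hn]
    have f1 : p.coeff (n' + 1 + 1) = 0 := coeff_eq_zero_of_natDegree_lt (by omega)
    have f2 : (derivative p).coeff (n' + 1) = 0 :=
      coeff_eq_zero_of_natDegree_lt (by have := p.natDegree_derivative_le; omega)
    have f3 : (derivative p).coeff n' = p.leadingCoeff * (n' + 1) := by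
      rw [coeff_derivative, hlcc]
    have e : qstep a r m p
        = (C (r:ℝ) * p + derivative p * X * C (a:ℝ))
          - (C (r:ℝ) * p + derivative p * X * C (a:ℝ)) * X * C (a:ℝ)
          + p * X * C ((m:ℝ) * (a:ℝ)^2) := by
      unfold qstep; ring
    have hcoeff : (qstep a r m p).coeff (n' + 1 + 1)
        = p.leadingCoeff * ((a:ℝ) * (((m:ℝ) - p.natDegree) * a - r)) := by
      rw [e]
      simp only [coeff_add, coeff_sub, coeff_mul_C, coeff_mul_X, coeff_C_mul, f1, f2, f3, hlcc, hn]
      push_cast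
      ring
    have hdegle : (qstep a r m p).natDegree ≤ n' + 1 + 1 := by
      rw [e]
      have hdA : (C (r:ℝ) * p + derivative p * X * C (a:ℝ)).natDegree ≤ n' + 1 := by
        refine le_trans (natDegree_add_le _ _) (max_le ?_ ?_)
        · exact le_trans natDegree_mul_le (by simp [hn])
        · refine le_trans natDegree_mul_le ?_
          simp only [natDegree_C, add_zero]
          refine le_trans natDegree_mul_le ?_
          have := p.natDegree_derivative_le
          simp only [natDegree_X]
          omega
      refine le_trans (natDegree_add_le _ _)
        (max_le (le_trans (natDegree_sub_le _ _) (max_le ?_ ?_)) ?_)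
      · omega
      · refine le_trans natDegree_mul_le ?_
        simp only [natDegree_C, add_zero]
        refine le_trans natDegree_mul_le ?_
        simp only [natDegree_X]
        omega
      · refine le_trans natDegree_mul_le ?_
        simp only [natDegree_C, add_zero]
        refine le_trans natDegree_mul_le ?_
        simp only [natDegree_X, hn]
        omega
    have hcval : (0:ℝ) < p.leadingCoeff * ((a:ℝ) * (((m:ℝ) - p.natDegree) * a - r)) :=
      mul_pos hc (mul_pos ha' hpos)
    have hdeg : (qstep a r m p).natDegree = n' + 1 + 1 :=
      natDegree_eq_of_le_of_coeff_ne_zero hdegle (by rw [hcoeff]; exact ne_of_gt hcval)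
    refine ⟨by rw [hdeg, hn], ?_⟩
    rw [Polynomial.leadingCoeff, hdeg, hcoeff]
    exact hcval

lemma deriv_congr_on (a : ℕ) (f g : ℝ → ℝ)
    (hfg : ∀ z : ℝ, 1 - (a : ℝ) * z ^ a ≠ 0 → f z = g z) (z : ℝ)
    (hz : 1 - (a : ℝ) * z ^ a ≠ 0) : deriv f z = deriv g z := by
  apply Filter.EventuallyEq.deriv_eq
  have hc : Continuous fun z : ℝ => 1 - (a : ℝ) * z ^ a := by continuity
  have hopen : IsOpen {z : ℝ | 1 - (a : ℝ) * z ^ a ≠ 0} := isOpen_ne_fun hc continuous_const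
  exact Filter.eventually_of_mem (hopen.mem_nhds hz) hfg

lemma key (a r m : ℕ) (ha : 1 ≤ a) (hr : 1 ≤ r) (hm : 1 ≤ m) (p : Polynomial ℝ) (z : ℝ)
    (hz : 1 - (a : ℝ) * z ^ a ≠ 0) :
    z / (1 - (a : ℝ) * z ^ a)
        * deriv (fun z : ℝ => z ^ r * p.eval (z ^ a) / (1 - (a : ℝ) * z ^ a) ^ m) z
      = z ^ r * (qstep a r m p).eval (z ^ a) / (1 - (a : ℝ) * z ^ a) ^ (m + 2) := by
  have h1 : HasDerivAt (fun z : ℝ => z ^ r) ((r : ℝ) * z ^ (r - 1)) z := hasDerivAt_pow r z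
  have h2 : HasDerivAt (fun z : ℝ => p.eval (z ^ a))
      (p.derivative.eval (z ^ a) * ((a : ℝ) * z ^ (a - 1))) z :=
    (p.hasDerivAt (z ^ a)).comp z (hasDerivAt_pow a z)
  have h3 := (((hasDerivAt_pow a z).const_mul (a : ℝ)).const_sub 1).pow m
  have hF := (h1.mul h2).div h3 (pow_ne_zero m hz)
  rw [show (fun z : ℝ => z ^ r * p.eval (z ^ a) / (1 - (a : ℝ) * z ^ a) ^ m) = ((fun z : ℝ => z ^ r) * fun z => p.eval (z ^ a)) / (fun x : ℝ => 1 - (a : ℝ) * x ^ a) ^ m from rfl, hF.deriv]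
  obtain ⟨m', rfl⟩ : ∃ m', m = m' + 1 := ⟨m - 1, by omega⟩
  obtain ⟨r', rfl⟩ : ∃ r', r = r' + 1 := ⟨r - 1, by omega⟩
  obtain ⟨a', rfl⟩ : ∃ a', a = a' + 1 := ⟨a - 1, by omega⟩
  simp only [Pi.pow_apply, Pi.mul_apply, Nat.add_sub_cancel, qstep, eval_add, eval_mul, eval_sub, eval_one, eval_C, eval_X,
    eval_pow]
  rw [div_mul_div_comm]
  rw [div_eq_div_iff (by exact mul_ne_zero hz (pow_ne_zero _ (pow_ne_zero _ hz)))
    (pow_ne_zero _ hz)]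
  generalize (1 - ((a' + 1 : ℕ) : ℝ) * z ^ (a' + 1)) = D
  ring

lemma xi_one (a r : ℕ) (ha : 0 < a) (hr1 : 1 ≤ r) (z : ℝ) :
    xi a r 1 z = z ^ r * (C (if r = a then (a:ℝ) else 1)).eval (z ^ a)
      / (1 - (a:ℝ) * z ^ a) ^ 1 := by
  have hz1 : z ^ (a-1) * z = z ^ a := by rw [← pow_succ]; congr 1; omega
  have hz2 : z ^ (r-1) * z = z ^ r := by rw [← pow_succ]; congr 1; omega
  have e1 : xi a r 1 z = z / (1 - (a:ℝ) * z ^ a) * deriv (xi a r 0) z := rfl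
  rw [e1, eval_C, pow_one]
  by_cases hra : r = a
  · have h0 : xi a r 0 = fun z : ℝ => z ^ a := by funext w; simp [xi, hra]
    rw [h0, if_pos hra, (hasDerivAt_pow a z).deriv, div_mul_eq_mul_div, hra]
    congr 1
    rw [← hz1]; ring
  · have h0 : xi a r 0 = fun z : ℝ => z ^ r / (r:ℝ) := by funext w; simp [xi, hra]
    have hr0 : (r : ℝ) ≠ 0 := by positivity
    rw [h0, if_neg hra]
    rw [deriv_div_const, (hasDerivAt_pow r z).deriv, div_mul_eq_mul_div, mul_div_assoc,
      div_div]
    rw [mul_div_assoc']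
    rw [show z * ((r:ℝ) * z ^ (r-1)) = z ^ r * (r:ℝ) from by rw [← hz2]; ring]
    rw [mul_comm ((r:ℝ)) (1 - (a:ℝ) * z ^ a), mul_div_mul_right _ _ hr0, mul_one]

/-- For every `k ≥ 1`, `ξ_k^{(r)}(z) = z^r p_k(z^a)/(1-az^a)^{2k+1}` for some polynomial
`p_k` of degree `k` if `1 ≤ r ≤ a-1` and degree `k-1` if `r = a`. -/
theorem xi_eq_poly (a r : ℕ) (ha : 0 < a) (hr1 : 1 ≤ r) (hr2 : r ≤ a) :
    ∀ k : ℕ, 1 ≤ k → ∃ p : Polynomial ℝ,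
      p.natDegree = (if r = a then k - 1 else k) ∧ p ≠ 0 ∧
      ∀ z : ℝ, 1 - a * z ^ a ≠ 0 →
        xi a r (k + 1) z = z ^ r * p.eval (z ^ a) / (1 - a * z ^ a) ^ (2 * k + 1) := by
  suffices H : ∀ k : ℕ, 1 ≤ k → ∃ p : Polynomial ℝ,
      p.natDegree = (if r = a then k - 1 else k) ∧ 0 < p.leadingCoeff ∧
      ∀ z : ℝ, 1 - (a:ℝ) * z ^ a ≠ 0 →
        xi a r (k + 1) z = z ^ r * p.eval (z ^ a) / (1 - (a:ℝ) * z ^ a) ^ (2 * k + 1) by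
    intro k hk
    obtain ⟨p, h1, h2, h3⟩ := H k hk
    exact ⟨p, h1, fun h0 => by simp [h0] at h2, h3⟩
  intro k hk
  induction k, hk using Nat.le_induction with
  | base =>
    set c₁ : ℝ := if r = a then (a:ℝ) else 1 with hc₁
    have hc₁pos : 0 < c₁ := by
      rw [hc₁]; split
      · exact_mod_cast ha
      · norm_num
    have heq : ∀ z : ℝ, 1 - (a:ℝ) * z ^ a ≠ 0 →
        xi a r (1+1) z = z ^ r * (qstep a r 1 (C c₁)).eval (z ^ a)
          / (1 - (a:ℝ) * z ^ a) ^ (2 * 1 + 1) := by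
      intro z hz
      have e2 : xi a r (1+1) z = z / (1 - (a:ℝ) * z ^ a) * deriv (xi a r 1) z := rfl
      rw [e2, deriv_congr_on a (xi a r 1)
        (fun w => w ^ r * (C c₁).eval (w ^ a) / (1 - (a:ℝ) * w ^ a) ^ 1)
        (fun w _ => xi_one a r ha hr1 w) z hz]
      exact key a r 1 ha hr1 le_rfl (C c₁) z hz
    by_cases hra : r = a
    · have hq : qstep a r 1 (C c₁) = C ((a:ℝ) ^ 2) := by
        subst hra
        unfold qstep
        rw [hc₁, if_pos rfl]
        simp only [derivative_C, mul_zero, add_zero, map_mul, map_pow, map_one, one_mul, C_1, Nat.cast_one]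
        ring
      refine ⟨qstep a r 1 (C c₁), ?_, ?_, heq⟩
      · rw [hq, natDegree_C, if_pos hra]
      · rw [hq, leadingCoeff_C]
        positivity
    · have hra' : r < a := lt_of_le_of_ne hr2 hra
      have hspec := qstep_spec a r 1 ha (C c₁)
        (by rw [leadingCoeff_C]; exact hc₁pos)
        (by rw [natDegree_C]; push_cast; simp; exact_mod_cast hra')
      refine ⟨qstep a r 1 (C c₁), ?_, hspec.2, heq⟩
      rw [hspec.1, natDegree_C, if_neg hra]
  | succ k hk ih =>
    obtain ⟨p, hdeg, hlc, hxe⟩ := ih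
    have h : (r:ℝ) < (((2*k+1 : ℕ):ℝ) - p.natDegree) * a := by
      rw [hdeg]
      have hk' : (1:ℝ) ≤ (k:ℝ) := by exact_mod_cast hk
      have ha' : (1:ℝ) ≤ (a:ℝ) := by exact_mod_cast ha
      by_cases hra : r = a
      · rw [if_pos hra]
        have hcast : ((k - 1 : ℕ) : ℝ) = (k:ℝ) - 1 := by
          rw [Nat.cast_sub hk]; norm_num
        rw [hcast, hra]
        push_cast
        nlinarith
      · rw [if_neg hra]
        have hra' : (r:ℝ) < (a:ℝ) := by exact_mod_cast lt_of_le_of_ne hr2 hra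
        push_cast
        nlinarith
    have hspec := qstep_spec a r (2*k+1) ha p hlc h
    refine ⟨qstep a r (2*k+1) p, ?_, hspec.2, ?_⟩
    · rw [hspec.1, hdeg]
      by_cases hra : r = a <;> simp [hra] <;> omega
    · intro z hz
      have e2 : xi a r (k+1+1) z = z / (1 - (a:ℝ) * z ^ a) * deriv (xi a r (k+1)) z := rfl
      rw [e2, deriv_congr_on a (xi a r (k+1))
        (fun w => w ^ r * p.eval (w ^ a) / (1 - (a:ℝ) * w ^ a) ^ (2*k+1)) hxe z hz,
        show 2*(k+1)+1 = (2*k+1)+2 from by ring]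
      exact key a r (2*k+1) ha hr1 (by omega) p z hz
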